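/- In the doubling algorithm for Gauss codes, the output code C' is a sequence of length twice the length of the b-free part of the input: concretely, C' = W ++ reverse(σ(W)) where W is the walk produced from the input by shifting labels by n on segments following an odd number of b's, and σ swaps labels j and j+n. In particular every label 1..2n appears exactly twice in C'. -/

import Mathlib

namespace GaussLift

/-- An entry of a generalised Gauss code for an `n`-crossing knotoid diagram:
`some (i, o)` is a passage through crossing `i` (`o = true` for an overpass),
`none` is a `b`-entry (an intersection with one of the two branch cut arcs). -/
abbrev Entry (n : ℕ) := Option (Fin n × Bool)

/-- Shift a label by `n` when an odd number of `b`-entries has been seen. -/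
def shiftLabel {n : ℕ} (i : Fin n) (parity : ℕ) : Fin (2 * n) :=
  if parity % 2 = 0 then ⟨i.1, by have := i.isLt; omega⟩
  else ⟨i.1 + n, by have := i.isLt; omega⟩

/-- The walk `W`: traverse the generalised code, copying label entries, adding `n`
to labels whenever an odd number of `b`-entries has been encountered so far, and
dropping the `b`-entries. -/
def walk {n : ℕ} : List (Entry n) → ℕ → List (Fin (2 * n) × Bool)
  | [], _ => []
  | none :: rest, parity => walk rest (parity + 1)
  | some (i, o) :: rest, parity => (shiftLabel i parity, o) :: walk rest parity

/-- The involution `σ` swapping labels `j` and `j + n`. -/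
def σswap {n : ℕ} (j : Fin (2 * n)) : Fin (2 * n) :=
  if h : j.1 < n then ⟨j.1 + n, by omega⟩ else ⟨j.1 - n, by have := j.isLt; omega⟩

/-- The output of the doubling algorithm: `C' = W ++ reverse (σ W)`. -/
def liftCode {n : ℕ} (L : List (Entry n)) : List (Fin (2 * n) × Bool) :=
  walk L 0 ++ ((walk L 0).map (fun e => (σswap e.1, e.2))).reverse

def lo {n : ℕ} (i : Fin n) : Fin (2 * n) := ⟨i.1, by have := i.isLt; omega⟩
def hi {n : ℕ} (i : Fin n) : Fin (2 * n) := ⟨i.1 + n, by have := i.isLt; omega⟩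

lemma walk_length {n : ℕ} (L : List (Entry n)) (p : ℕ) :
    (walk L p).length = (L.filterMap id).length := by
  induction L generalizing p with
  | nil => simp [walk]
  | cons a rest ih =>
    match a with
    | none => simpa [walk] using ih (p + 1)
    | some (i, o) => simp [walk, ih p]

lemma σswap_σswap {n : ℕ} (j : Fin (2 * n)) : σswap (σswap j) = j := by
  have hlt := j.isLt
  apply Fin.ext
  rcases Nat.lt_or_ge j.1 n with h | h
  · have e : σswap j = ⟨j.1 + n, by omega⟩ := by rw [σswap, dif_pos h]
    rw [e, σswap, dif_neg (show ¬ (j.1 + n < n) by omega)]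
    show j.1 + n - n = j.1; omega
  · have e : σswap j = ⟨j.1 - n, by omega⟩ := by rw [σswap, dif_neg (by omega)]
    rw [e, σswap, dif_pos (show j.1 - n < n by omega)]
    show j.1 - n + n = j.1; omega

lemma walk_count {n : ℕ} (L : List (Entry n)) (i : Fin n) (p : ℕ) :
    (walk L p).countP (fun e => decide (e.1 = lo i)) +
    (walk L p).countP (fun e => decide (e.1 = hi i)) =
    (L.filterMap id).countP (fun e => decide (e.1 = i)) := by
  induction L generalizing p with
  | nil => simp [walk]
  | cons a rest ih =>
    match a with
    | none => simpa [walk] using ih (p + 1)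
    | some (i', o) =>
      have hi' := i'.isLt
      have hii := i.isLt
      simp only [walk, List.filterMap_cons, id, List.countP_cons]
      by_cases h : i' = i
      · subst h
        by_cases hp : p % 2 = 0
        · have h1 : shiftLabel i' p = lo i' := by
            simp [shiftLabel, hp, lo]
          have h2 : shiftLabel i' p ≠ hi i' := by
            simp [shiftLabel, hp, hi, Fin.ext_iff]; omega
          have hlh : lo i' ≠ hi i' := by simp [lo, hi, Fin.ext_iff]; omega
          have := ih p; simp only [id] at this; simp [h1, h2, hlh, Ne.symm hlh]; omega
        · have h1 : shiftLabel i' p = hi i' := by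
            simp [shiftLabel, hp, hi]
          have h2 : shiftLabel i' p ≠ lo i' := by
            simp [shiftLabel, hp, lo, Fin.ext_iff]; omega
          have hlh : lo i' ≠ hi i' := by simp [lo, hi, Fin.ext_iff]; omega
          have := ih p; simp only [id] at this; simp [h1, h2, hlh, Ne.symm hlh]; omega
      · have hne : i'.1 ≠ i.1 := fun hh => h (Fin.ext hh)
        have h1 : shiftLabel i' p ≠ lo i := by
          simp only [shiftLabel, lo, Fin.ext_iff]
          split_ifs <;> simp <;> omega
        have h2 : shiftLabel i' p ≠ hi i := by
          simp only [shiftLabel, hi, Fin.ext_iff]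
          split_ifs <;> simp <;> omega
        simp [h1, h2, h, ih p]
  
/-- for a generalised Gauss code `L` of an `n`-crossing knotoid
diagram (each label appearing exactly twice), the output `C'` of the doubling
algorithm is `W ++ reverse(σ(W))`, its length is twice the length of the `b`-free
part of `L`, and every label `1..2n` appears exactly twice in `C'`: the output is
a valid Gauss code sequence on `2n` labels. -/
theorem stmt16 {n : ℕ} (L : List (Entry n))
    (hL : ∀ i : Fin n, (L.filterMap id).countP (fun e => decide (e.1 = i)) = 2) :
    liftCode L = walk L 0 ++ ((walk L 0).map (fun e => (σswap e.1, e.2))).reverse ∧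
    (liftCode L).length = 2 * (L.filterMap id).length ∧
    ∀ j : Fin (2 * n), (liftCode L).countP (fun e => decide (e.1 = j)) = 2 := by
  refine ⟨rfl, ?_, ?_⟩
  · simp [liftCode, walk_length]; ring
  · intro j
    have hjlt := j.isLt
    have key : (liftCode L).countP (fun e => decide (e.1 = j)) =
        (walk L 0).countP (fun e => decide (e.1 = j)) +
        (walk L 0).countP (fun e => decide (e.1 = σswap j)) := by
      simp only [liftCode, List.countP_append, List.countP_reverse, List.countP_map]
      congr 1
      apply List.countP_congr
      intro e _
      simp only [Function.comp, decide_eq_true_eq]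
      constructor
      · intro h; rw [← h, σswap_σswap]
      · intro h; rw [h, σswap_σswap]
    by_cases hj : j.1 < n
    · have hw := walk_count L ⟨j.1, hj⟩ 0
      rw [hL] at hw
      have e1 : lo ⟨j.1, hj⟩ = j := rfl
      have e2 : σswap j = hi ⟨j.1, hj⟩ := by
        simp [σswap, hj, hi]
      rw [e1, ← e2] at hw
      rw [key]; exact hw
    · have hj' : j.1 - n < n := by have := j.isLt; omega
      have hw := walk_count L ⟨j.1 - n, hj'⟩ 0
      rw [hL] at hw
      have e1 : hi ⟨j.1 - n, hj'⟩ = j := by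
        simp [hi, Fin.ext_iff]; omega
      have e2 : σswap j = lo ⟨j.1 - n, hj'⟩ := by
        simp [σswap, hj, lo]
      rw [e1, ← e2] at hw
      rw [key]; omega

end GaussLift
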